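/- Let n ≥ 1, let E be a real inner product space, let M ⊆ E be nonempty, and let P : E → E be a nearest-point projection onto M satisfying ‖P z − P w‖ ≤ R · ‖z − w‖ for all z, w ∈ E, with R > 0. Let A be an n×n doubly stochastic matrix that is σ-contractive on mean-zero families with σ ≥ 0, and suppose ρ := σ R < 1. Let α ≥ 0, let v : ℕ → Fin n → E, and let x : ℕ → Fin n → E satisfy x (k+1) i = P((A·(x k)) i − α • (v k i)) for all k and i. Writing x̄ k := P((1/n) ∑_i x k i), it holds for every natural number K that ∑_{k=0}^{K} ∑_i ‖x k i − x̄ k‖² ≤ (2 α² R²/(1−ρ)²) · ∑_{k=0}^{K} ∑_i ‖v k i‖² + (2/(1−ρ²)) · ∑_i ‖x 0 i − x̄ 0‖². (The summed consensus-error bound, Eq. (41) in the paper's proof of its main theorem, with constants C̃₁ = 2/(1−ρ)² and C̃₂-type initial term.) -/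

import Mathlib

open Finset

lemma l2_triangle_aux {E : Type*} [NormedAddCommGroup E] [InnerProductSpace ℝ E]
    {n : ℕ} (a b : Fin n → E) :
    Real.sqrt (∑ i, ‖a i + b i‖ ^ 2) ≤
      Real.sqrt (∑ i, ‖a i‖ ^ 2) + Real.sqrt (∑ i, ‖b i‖ ^ 2) := by
  have h := norm_add_le ((WithLp.equiv 2 (∀ _ : Fin n, E)).symm a)
      ((WithLp.equiv 2 (∀ _ : Fin n, E)).symm b)
  rw [PiLp.norm_eq_of_L2, PiLp.norm_eq_of_L2, PiLp.norm_eq_of_L2] at h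
  simpa using h

lemma var_identity {E : Type*} [NormedAddCommGroup E] [InnerProductSpace ℝ E]
    {n : ℕ} (hn : (n : ℝ) ≠ 0) (y : Fin n → E) (c : E) :
    ∑ i, ‖y i - c‖ ^ 2
      = (∑ i, ‖y i - (n : ℝ)⁻¹ • ∑ j, y j‖ ^ 2)
        + (n : ℝ) * ‖(n : ℝ)⁻¹ • (∑ j, y j) - c‖ ^ 2 := by
  set μ : E := (n : ℝ)⁻¹ • ∑ j, y j with hμ
  have hsum0 : ∑ i, (y i - μ) = 0 := by
    rw [Finset.sum_sub_distrib]
    have h1 : (∑ _i : Fin n, μ) = (n : ℝ) • μ := by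
      simp [Finset.sum_const, Finset.card_univ, ← Nat.cast_smul_eq_nsmul ℝ]
    rw [h1, hμ, smul_smul, mul_inv_cancel₀ hn, one_smul, sub_self]
  have expand : ∀ i : Fin n, ‖y i - c‖ ^ 2
      = ‖y i - μ‖ ^ 2 + 2 * (inner ℝ (y i - μ) (μ - c) : ℝ) + ‖μ - c‖ ^ 2 := by
    intro i
    have h : y i - c = (y i - μ) + (μ - c) := by abel
    rw [h, norm_add_sq_real]
  calc ∑ i, ‖y i - c‖ ^ 2
      = ∑ i, (‖y i - μ‖ ^ 2 + 2 * (inner ℝ (y i - μ) (μ - c) : ℝ) + ‖μ - c‖ ^ 2) :=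
        Finset.sum_congr rfl fun i _ => expand i
    _ = (∑ i, ‖y i - μ‖ ^ 2) + (∑ i, 2 * (inner ℝ (y i - μ) (μ - c) : ℝ))
          + (n : ℝ) * ‖μ - c‖ ^ 2 := by
        rw [Finset.sum_add_distrib, Finset.sum_add_distrib]
        simp [Finset.sum_const, Finset.card_univ, mul_comm]
    _ = _ := by
        have hz : (∑ i, 2 * (inner ℝ (y i - μ) (μ - c) : ℝ)) = 0 := by
          rw [← Finset.mul_sum, ← sum_inner, hsum0, inner_zero_left, mul_zero]
        rw [hz, add_zero]

lemma young_aux (p a c : ℝ) (hp0 : 0 ≤ p) (h1p : 0 < 1 - p) (ha : 0 ≤ a) (hc : 0 ≤ c) :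
    (p * a + c) ^ 2 ≤ p * a ^ 2 + c ^ 2 / (1 - p) := by
  have h := (le_div_iff₀ h1p).mpr
    (show ((p * a + c) ^ 2 - p * a ^ 2) * (1 - p) ≤ c ^ 2 by
      nlinarith [mul_nonneg hp0 (sq_nonneg ((1 - p) * a - c))])
  linarith

set_option maxHeartbeats 2000000 in
/-- Summed consensus-error bound (Eq. (41) in the paper's main-theorem proof):
under the projected consensus iteration `x (k+1) i = P((A·x k) i - α • v k i)`
with `ρ = σ R < 1`,
`∑_{k=0}^{K} ∑_i ‖x k i - x̄ k‖² ≤ (2α²R²/(1-ρ)²) ∑_{k=0}^{K} ∑_i ‖v k i‖²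
  + (2/(1-ρ²)) ∑_i ‖x 0 i - x̄ 0‖²`. -/
theorem consensus_error_summed_bound
    {E : Type*} [NormedAddCommGroup E] [InnerProductSpace ℝ E]
    (n : ℕ) (hn : 1 ≤ n)
    (M : Set E) (hM : M.Nonempty)
    (P : E → E) (hPin : ∀ z, P z ∈ M)
    (hPnear : ∀ z : E, ∀ y ∈ M, ‖z - P z‖ ≤ ‖z - y‖)
    (R : ℝ) (hR : 0 < R)
    (hPlip : ∀ z w : E, ‖P z - P w‖ ≤ R * ‖z - w‖)
    (A : Fin n → Fin n → ℝ)
    (hA0 : ∀ i j, 0 ≤ A i j)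
    (hArow : ∀ i, ∑ j, A i j = 1)
    (hAcol : ∀ j, ∑ i, A i j = 1)
    (σ : ℝ) (hσ : 0 ≤ σ)
    (hcontr : ∀ v : Fin n → E, (∑ i, v i) = 0 →
      Real.sqrt (∑ i, ‖∑ j, A i j • v j‖ ^ 2) ≤ σ * Real.sqrt (∑ i, ‖v i‖ ^ 2))
    (hρ : σ * R < 1)
    (α : ℝ) (hα : 0 ≤ α)
    (v : ℕ → Fin n → E)
    (x : ℕ → Fin n → E)
    (hx : ∀ k i, x (k + 1) i = P ((∑ j, A i j • x k j) - α • v k i))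
    (xbar : ℕ → E)
    (hxbar : ∀ k, xbar k = P ((n : ℝ)⁻¹ • ∑ i, x k i)) :
    ∀ K : ℕ, ∑ k ∈ Finset.range (K + 1), ∑ i, ‖x k i - xbar k‖ ^ 2 ≤
      (2 * α ^ 2 * R ^ 2 / (1 - σ * R) ^ 2) *
          ∑ k ∈ Finset.range (K + 1), ∑ i, ‖v k i‖ ^ 2
        + (2 / (1 - (σ * R) ^ 2)) * ∑ i, ‖x 0 i - xbar 0‖ ^ 2 := by
  intro K
  set ρ : ℝ := σ * R with hρdef
  have hρ0 : 0 ≤ ρ := mul_nonneg hσ hR.le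
  have h1ρ : 0 < 1 - ρ := by linarith
  have hn1 : (1 : ℝ) ≤ (n : ℝ) := by exact_mod_cast hn
  have hnne : (n : ℝ) ≠ 0 := by linarith
  have hMx : ∀ k, xbar k ∈ M := fun k => by rw [hxbar k]; exact hPin _
  have hsnn : ∀ k, 0 ≤ ∑ i, ‖x k i - xbar k‖ ^ 2 :=
    fun k => Finset.sum_nonneg fun i _ => sq_nonneg _
  have hwnn : ∀ k, 0 ≤ ∑ i, ‖v k i‖ ^ 2 :=
    fun k => Finset.sum_nonneg fun i _ => sq_nonneg _
  -- per-step inequality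
  have hstep : ∀ k, (∑ i, ‖x (k + 1) i - xbar (k + 1)‖ ^ 2)
      ≤ ρ * (∑ i, ‖x k i - xbar k‖ ^ 2)
        + (α ^ 2 * R ^ 2 / (1 - ρ)) * (∑ i, ‖v k i‖ ^ 2) := by
    intro k
    set μ : E := (n : ℝ)⁻¹ • ∑ j, x k j with hμdef
    set u : Fin n → E := fun j => x k j - μ with hudef
    have hu0 : ∑ j, u j = 0 := by
      rw [hudef, Finset.sum_sub_distrib]
      have h1 : (∑ _i : Fin n, μ) = (n : ℝ) • μ := by
        simp [Finset.sum_const, Finset.card_univ, ← Nat.cast_smul_eq_nsmul ℝ]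
      rw [h1, hμdef, smul_smul, mul_inv_cancel₀ hnne, one_smul, sub_self]
    -- the u-variance is at most the consensus error
    have h5 : ∑ j, ‖u j‖ ^ 2 ≤ ∑ i, ‖x k i - xbar k‖ ^ 2 := by
      have e := var_identity hnne (x k) (xbar k)
      rw [← hμdef] at e
      have hpos : 0 ≤ (n : ℝ) * ‖μ - xbar k‖ ^ 2 := by positivity
      rw [e]
      simp only [hudef]
      linarith
    -- projection onto the mean reduces the consensus error
    have h1' : (∑ i, ‖x (k + 1) i - xbar (k + 1)‖ ^ 2)
        ≤ ∑ i, ‖x (k + 1) i - xbar k‖ ^ 2 := by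
      have e1 := var_identity hnne (x (k + 1)) (xbar (k + 1))
      have e2 := var_identity hnne (x (k + 1)) (xbar k)
      rw [e1, e2]
      have hproj : ‖(n : ℝ)⁻¹ • (∑ j, x (k + 1) j) - xbar (k + 1)‖
          ≤ ‖(n : ℝ)⁻¹ • (∑ j, x (k + 1) j) - xbar k‖ := by
        rw [hxbar (k + 1)]
        exact hPnear _ _ (hMx k)
      have hsq := pow_le_pow_left₀ (norm_nonneg _) hproj 2
      have hn0 : (0 : ℝ) ≤ (n : ℝ) := by linarith
      have := mul_le_mul_of_nonneg_left hsq hn0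
      linarith
    -- Lipschitz bound for each coordinate
    have h2 : ∀ i, ‖x (k + 1) i - xbar k‖ ^ 2
        ≤ R ^ 2 * ‖((∑ j, A i j • x k j) - α • v k i) - μ‖ ^ 2 := by
      intro i
      have hl : ‖x (k + 1) i - xbar k‖
          ≤ R * ‖((∑ j, A i j • x k j) - α • v k i) - μ‖ := by
        rw [hx k i, hxbar k, ← hμdef]
        exact hPlip _ _
      calc ‖x (k + 1) i - xbar k‖ ^ 2
          ≤ (R * ‖((∑ j, A i j • x k j) - α • v k i) - μ‖) ^ 2 :=
            pow_le_pow_left₀ (norm_nonneg _) hl 2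
        _ = R ^ 2 * ‖((∑ j, A i j • x k j) - α • v k i) - μ‖ ^ 2 := by ring
    -- decomposition
    have h3 : ∀ i, ((∑ j, A i j • x k j) - α • v k i) - μ
        = (∑ j, A i j • u j) + (-(α • v k i)) := by
      intro i
      have hAu : ∑ j, A i j • u j = (∑ j, A i j • x k j) - μ := by
        simp only [hudef, smul_sub]
        rw [Finset.sum_sub_distrib, ← Finset.sum_smul, hArow i, one_smul]
      rw [hAu]; abel
    -- chain to R^2 * sum
    have hT : (∑ i, ‖x (k + 1) i - xbar (k + 1)‖ ^ 2)
        ≤ R ^ 2 * ∑ i, ‖((∑ j, A i j • x k j) - α • v k i) - μ‖ ^ 2 := by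
      calc (∑ i, ‖x (k + 1) i - xbar (k + 1)‖ ^ 2)
          ≤ ∑ i, ‖x (k + 1) i - xbar k‖ ^ 2 := h1'
        _ ≤ ∑ i, R ^ 2 * ‖((∑ j, A i j • x k j) - α • v k i) - μ‖ ^ 2 :=
            Finset.sum_le_sum fun i _ => h2 i
        _ = R ^ 2 * ∑ i, ‖((∑ j, A i j • x k j) - α • v k i) - μ‖ ^ 2 := by
            rw [Finset.mul_sum]
    -- triangle inequality + contraction
    have htri : Real.sqrt (∑ i, ‖((∑ j, A i j • x k j) - α • v k i) - μ‖ ^ 2)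
        ≤ σ * Real.sqrt (∑ j, ‖u j‖ ^ 2) + α * Real.sqrt (∑ i, ‖v k i‖ ^ 2) := by
      have hre : (∑ i, ‖((∑ j, A i j • x k j) - α • v k i) - μ‖ ^ 2)
          = ∑ i, ‖(∑ j, A i j • u j) + (-(α • v k i))‖ ^ 2 :=
        Finset.sum_congr rfl fun i _ => by rw [h3 i]
      rw [hre]
      have t := l2_triangle_aux (fun i => ∑ j, A i j • u j) (fun i => -(α • v k i))
      have tb : Real.sqrt (∑ i, ‖-(α • v k i)‖ ^ 2)
          = α * Real.sqrt (∑ i, ‖v k i‖ ^ 2) := by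
        have hterm : ∀ i : Fin n, ‖-(α • v k i)‖ ^ 2 = α ^ 2 * ‖v k i‖ ^ 2 := by
          intro i
          rw [norm_neg, norm_smul, Real.norm_eq_abs, abs_of_nonneg hα, mul_pow]
        rw [Finset.sum_congr rfl fun i _ => hterm i, ← Finset.mul_sum,
          Real.sqrt_mul (sq_nonneg α), Real.sqrt_sq hα]
      rw [tb] at t
      exact t.trans (add_le_add (hcontr u hu0) le_rfl)
    -- sqrt recursion
    have key : Real.sqrt (∑ i, ‖x (k + 1) i - xbar (k + 1)‖ ^ 2)
        ≤ ρ * Real.sqrt (∑ i, ‖x k i - xbar k‖ ^ 2)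
          + α * R * Real.sqrt (∑ i, ‖v k i‖ ^ 2) := by
      have s1 : Real.sqrt (∑ i, ‖x (k + 1) i - xbar (k + 1)‖ ^ 2)
          ≤ R * Real.sqrt (∑ i, ‖((∑ j, A i j • x k j) - α • v k i) - μ‖ ^ 2) := by
        have h := Real.sqrt_le_sqrt hT
        rwa [Real.sqrt_mul (sq_nonneg R), Real.sqrt_sq hR.le] at h
      have s2 : Real.sqrt (∑ j, ‖u j‖ ^ 2)
          ≤ Real.sqrt (∑ i, ‖x k i - xbar k‖ ^ 2) := Real.sqrt_le_sqrt h5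
      have s3 := s1.trans (mul_le_mul_of_nonneg_left htri hR.le)
      have s4 := mul_le_mul_of_nonneg_left s2 (mul_nonneg hR.le hσ)
      rw [hρdef]
      nlinarith [s3, s4]
    -- square it
    have ha2 : (Real.sqrt (∑ i, ‖x k i - xbar k‖ ^ 2)) ^ 2
        = ∑ i, ‖x k i - xbar k‖ ^ 2 := Real.sq_sqrt (hsnn k)
    have hb2 : (Real.sqrt (∑ i, ‖v k i‖ ^ 2)) ^ 2
        = ∑ i, ‖v k i‖ ^ 2 := Real.sq_sqrt (hwnn k)
    set a := Real.sqrt (∑ i, ‖x k i - xbar k‖ ^ 2) with hadef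
    set b := Real.sqrt (∑ i, ‖v k i‖ ^ 2) with hbdef
    have ha0 : 0 ≤ a := Real.sqrt_nonneg _
    have hb0 : 0 ≤ b := Real.sqrt_nonneg _
    have h6 : (∑ i, ‖x (k + 1) i - xbar (k + 1)‖ ^ 2)
        ≤ (ρ * a + α * R * b) ^ 2 := by
      rw [← Real.sq_sqrt (hsnn (k + 1))]
      exact pow_le_pow_left₀ (Real.sqrt_nonneg _) key 2
    have h7 : (ρ * a + α * R * b) ^ 2
        ≤ ρ * a ^ 2 + (α ^ 2 * R ^ 2 / (1 - ρ)) * b ^ 2 := by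
      have hy := young_aux ρ a (α * R * b) hρ0 h1ρ ha0
        (mul_nonneg (mul_nonneg hα hR.le) hb0)
      have he : (α * R * b) ^ 2 / (1 - ρ) = (α ^ 2 * R ^ 2 / (1 - ρ)) * b ^ 2 := by
        ring
      rw [he] at hy
      exact hy
    rw [← ha2, ← hb2]
    linarith
  -- assemble
  have hc0 : 0 ≤ α ^ 2 * R ^ 2 / (1 - ρ) := by positivity
  set S := ∑ k ∈ Finset.range (K + 1), ∑ i, ‖x k i - xbar k‖ ^ 2 with hSdef
  set W := ∑ k ∈ Finset.range (K + 1), ∑ i, ‖v k i‖ ^ 2 with hWdef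
  have hS0 : 0 ≤ S := Finset.sum_nonneg fun k _ => hsnn k
  have hW0 : 0 ≤ W := Finset.sum_nonneg fun k _ => hwnn k
  have hs00 : 0 ≤ ∑ i, ‖x 0 i - xbar 0‖ ^ 2 := hsnn 0
  have hrec : S ≤ (∑ i, ‖x 0 i - xbar 0‖ ^ 2) + ρ * S + (α ^ 2 * R ^ 2 / (1 - ρ)) * W := by
    have e : S = (∑ k ∈ Finset.range K, ∑ i, ‖x (k + 1) i - xbar (k + 1)‖ ^ 2)
        + (∑ i, ‖x 0 i - xbar 0‖ ^ 2) := by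
      rw [hSdef, Finset.sum_range_succ']
    have b1 : (∑ k ∈ Finset.range K, ∑ i, ‖x (k + 1) i - xbar (k + 1)‖ ^ 2)
        ≤ ρ * (∑ k ∈ Finset.range K, ∑ i, ‖x k i - xbar k‖ ^ 2)
          + (α ^ 2 * R ^ 2 / (1 - ρ)) * (∑ k ∈ Finset.range K, ∑ i, ‖v k i‖ ^ 2) := by
      rw [Finset.mul_sum, Finset.mul_sum, ← Finset.sum_add_distrib]
      exact Finset.sum_le_sum fun k _ => hstep k
    have b2 : (∑ k ∈ Finset.range K, ∑ i, ‖x k i - xbar k‖ ^ 2) ≤ S := by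
      rw [hSdef]
      exact Finset.sum_le_sum_of_subset_of_nonneg
        (Finset.range_subset_range.mpr (Nat.le_succ K)) (fun k _ _ => hsnn k)
    have b3 : (∑ k ∈ Finset.range K, ∑ i, ‖v k i‖ ^ 2) ≤ W := by
      rw [hWdef]
      exact Finset.sum_le_sum_of_subset_of_nonneg
        (Finset.range_subset_range.mpr (Nat.le_succ K)) (fun k _ _ => hwnn k)
    have c1 := mul_le_mul_of_nonneg_left b2 hρ0
    have c2 := mul_le_mul_of_nonneg_left b3 hc0
    linarith
  have h1ρ2 : 0 < 1 - ρ ^ 2 := by nlinarith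
  have step1 : S ≤ ((∑ i, ‖x 0 i - xbar 0‖ ^ 2) + (α ^ 2 * R ^ 2 / (1 - ρ)) * W) / (1 - ρ) := by
    rw [le_div_iff₀ h1ρ]
    nlinarith [hrec]
  have step2 : ((∑ i, ‖x 0 i - xbar 0‖ ^ 2) + (α ^ 2 * R ^ 2 / (1 - ρ)) * W) / (1 - ρ)
      = (∑ i, ‖x 0 i - xbar 0‖ ^ 2) / (1 - ρ) + (α ^ 2 * R ^ 2 / (1 - ρ) ^ 2) * W := by
    field_simp
  have step3 : (∑ i, ‖x 0 i - xbar 0‖ ^ 2) / (1 - ρ)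
      ≤ 2 / (1 - ρ ^ 2) * (∑ i, ‖x 0 i - xbar 0‖ ^ 2) := by
    rw [show (2 : ℝ) / (1 - ρ ^ 2) * (∑ i, ‖x 0 i - xbar 0‖ ^ 2)
      = (2 * ∑ i, ‖x 0 i - xbar 0‖ ^ 2) / (1 - ρ ^ 2) by ring,
      div_le_div_iff₀ h1ρ h1ρ2]
    nlinarith [mul_nonneg hs00 (sq_nonneg (1 - ρ))]
  have step4 : (α ^ 2 * R ^ 2 / (1 - ρ) ^ 2) * W ≤ (2 * α ^ 2 * R ^ 2 / (1 - ρ) ^ 2) * W := by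
    have hq : 0 ≤ (α ^ 2 * R ^ 2 / (1 - ρ) ^ 2) * W := by positivity
    have he : (2 * α ^ 2 * R ^ 2 / (1 - ρ) ^ 2) * W
        = (α ^ 2 * R ^ 2 / (1 - ρ) ^ 2) * W + (α ^ 2 * R ^ 2 / (1 - ρ) ^ 2) * W := by
      ring
    linarith
  rw [step2] at step1
  linarith
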